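/- arXiv:1912.01445 — 2 statements merged into one kernel-verified Lean document; each statement's English description precedes it below -/
import Mathlib

section
/- For every positive integer n, the sum over k from 0 to n-1 of (-1/8)^k * (sum over j from 0 to k of binom(2j,j)*binom(2k-2j,k-j)*(6j+1)*(6k-6j+1)) equals (-1/2)^n * n * (1 - 3n). -/
open Finset

private noncomputable def cb (j : ℕ) : ℚ := ((2 * j).choose j : ℚ)

private lemma cb_rec (j : ℕ) : ((j : ℚ) + 1) * cb (j + 1) = 2 * (2 * j + 1) * cb j := by
  have h := Nat.succ_mul_centralBinom_succ j
  have h2 : ∀ m, (Nat.centralBinom m : ℚ) = cb m := by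
    intro m; simp [Nat.centralBinom, cb]
  have := congrArg (fun x : ℕ => (x : ℚ)) h
  push_cast at this
  rw [h2, h2] at this
  linarith [this]

private noncomputable def S1 (k : ℕ) : ℚ := ∑ j ∈ range (k + 1), cb j * cb (k - j)

private noncomputable def T1 (k : ℕ) : ℚ := ∑ j ∈ range (k + 1), (j : ℚ) * cb j * cb (k - j)

private noncomputable def S2 (k : ℕ) : ℚ :=
  ∑ j ∈ range (k + 1), (j : ℚ) * ((k - j : ℕ) : ℚ) * cb j * cb (k - j)

private lemma T1_eq (k : ℕ) : 2 * T1 k = (k : ℚ) * S1 k := by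
  have hrefl : T1 k = ∑ j ∈ range (k + 1), ((k - j : ℕ) : ℚ) * cb (k - j) * cb j := by
    rw [T1, ← Finset.sum_range_reflect]
    apply Finset.sum_congr rfl
    intro j hj
    simp only [Finset.mem_range] at hj
    have hj' : j ≤ k := Nat.lt_succ_iff.mp hj
    have : k - (k - j) = j := Nat.sub_sub_self hj'
    simp [Nat.succ_sub_one, this]
  have : T1 k + T1 k = ∑ j ∈ range (k + 1), (k : ℚ) * (cb j * cb (k - j)) := by
    nth_rewrite 2 [hrefl]
    rw [T1, ← Finset.sum_add_distrib]
    apply Finset.sum_congr rfl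
    intro j hj
    simp only [Finset.mem_range] at hj
    have hj' : j ≤ k := Nat.lt_succ_iff.mp hj
    have : ((j : ℚ) + ((k - j : ℕ) : ℚ)) = (k : ℚ) := by
      rw [← Nat.cast_add, Nat.add_sub_cancel' hj']
    linear_combination (cb j * cb (k - j)) * this
  rw [S1, Finset.mul_sum]
  linarith [this]

private lemma S1_succ (k : ℕ) : S1 (k + 1) = 4 * S1 k := by
  have key : ((k : ℚ) + 1) * S1 (k + 1) = 4 * ((k : ℚ) + 1) * S1 k := by
    have h1 : ((k : ℚ) + 1) * S1 (k + 1) = 2 * T1 (k + 1) := by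
      have := T1_eq (k + 1)
      push_cast at this ⊢
      linarith
    have h2 : T1 (k + 1) = ∑ i ∈ range (k + 1), 2 * (2 * i + 1) * cb i * cb (k - i) := by
      rw [T1, Finset.sum_range_succ']
      simp only [Nat.cast_zero, zero_mul, add_zero]
      apply Finset.sum_congr rfl
      intro i hi
      have hrec := cb_rec i
      have : (k + 1) - (i + 1) = k - i := by omega
      rw [this]
      push_cast
      linear_combination cb (k - i) * hrec
    have h3 : (∑ i ∈ range (k + 1), 2 * (2 * i + 1) * cb i * cb (k - i))
        = 4 * T1 k + 2 * S1 k := by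
      rw [T1, S1, Finset.mul_sum, Finset.mul_sum, ← Finset.sum_add_distrib]
      apply Finset.sum_congr rfl
      intro i _; ring
    have h4 := T1_eq k
    rw [h1, h2, h3]
    linarith
  have hk : ((k : ℚ) + 1) ≠ 0 := by positivity
  have key' : ((k : ℚ) + 1) * S1 (k + 1) = ((k : ℚ) + 1) * (4 * S1 k) := by
    linear_combination key
  exact mul_left_cancel₀ hk key'

private lemma S1_eq (k : ℕ) : S1 k = 4 ^ k := by
  induction k with
  | zero => simp [S1, cb]
  | succ k ih => rw [S1_succ, ih]; ring

private lemma T1_val (k : ℕ) : T1 k = (k : ℚ) * 4 ^ k / 2 := by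
  have := T1_eq k
  rw [S1_eq] at this
  linarith

private lemma S2_succ (k : ℕ) : S2 (k + 1) = 4 * S2 k + (k : ℚ) * 4 ^ k := by
  have h2 : S2 (k + 1) = ∑ i ∈ range (k + 1),
      2 * (2 * i + 1) * cb i * (((k - i : ℕ) : ℚ) * cb (k - i)) := by
    rw [S2, Finset.sum_range_succ']
    simp only [Nat.cast_zero, zero_mul, mul_zero, add_zero]
    apply Finset.sum_congr rfl
    intro i hi
    have hrec := cb_rec i
    have he : (k + 1) - (i + 1) = k - i := by omega
    rw [he]
    push_cast
    linear_combination (((k - i : ℕ) : ℚ) * cb (k - i)) * hrec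
  have hrefl : (∑ i ∈ range (k + 1), ((k - i : ℕ) : ℚ) * cb i * cb (k - i)) = T1 k := by
    rw [T1, ← Finset.sum_range_reflect]
    apply Finset.sum_congr rfl
    intro j hj
    simp only [Finset.mem_range] at hj
    have hj' : j ≤ k := Nat.lt_succ_iff.mp hj
    have h1 : k - (k - j) = j := Nat.sub_sub_self hj'
    simp only [Nat.succ_sub_one, h1]
    ring
  have h3 : S2 (k + 1) = 4 * S2 k + 2 * T1 k := by
    rw [h2, S2, ← hrefl, Finset.mul_sum, Finset.mul_sum, ← Finset.sum_add_distrib]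
    apply Finset.sum_congr rfl
    intro i _; ring
  rw [h3, T1_val]; ring

private lemma S2_eq (k : ℕ) : S2 k = (k : ℚ) * ((k : ℚ) - 1) * 4 ^ k / 8 := by
  induction k with
  | zero => simp [S2]
  | succ k ih => rw [S2_succ, ih]; push_cast; ring

private lemma inner_eq (k : ℕ) :
    (∑ j ∈ Finset.range (k + 1),
        ((2 * j).choose j : ℚ) * (2 * (k - j)).choose (k - j) * (6 * j + 1) * (6 * (k - j : ℕ) + 1))
      = 4 ^ k * (9 * k ^ 2 + 3 * k + 2) / 2 := by
  have expand : (∑ j ∈ Finset.range (k + 1),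
        ((2 * j).choose j : ℚ) * (2 * (k - j)).choose (k - j) * (6 * j + 1) * (6 * (k - j : ℕ) + 1))
      = 36 * S2 k + 6 * T1 k
        + 6 * (∑ j ∈ range (k + 1), ((k - j : ℕ) : ℚ) * cb j * cb (k - j)) + S1 k := by
    rw [S2, T1, S1, Finset.mul_sum, Finset.mul_sum, Finset.mul_sum,
      ← Finset.sum_add_distrib, ← Finset.sum_add_distrib, ← Finset.sum_add_distrib]
    apply Finset.sum_congr rfl
    intro j _
    simp only [cb]
    ring
  have hrefl : (∑ j ∈ range (k + 1), ((k - j : ℕ) : ℚ) * cb j * cb (k - j)) = T1 k := by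
    rw [T1, ← Finset.sum_range_reflect]
    apply Finset.sum_congr rfl
    intro j hj
    simp only [Finset.mem_range] at hj
    have hj' : j ≤ k := Nat.lt_succ_iff.mp hj
    have h1 : k - (k - j) = j := Nat.sub_sub_self hj'
    simp only [Nat.succ_sub_one, h1]
    ring
  rw [expand, hrefl, S2_eq, T1_val, S1_eq]
  ring

theorem stmt_3 (n : ℕ) (hn : 0 < n) :
    (∑ k ∈ Finset.range n, (-1 / 8 : ℚ) ^ k *
      ∑ j ∈ Finset.range (k + 1),
        ((2 * j).choose j : ℚ) * (2 * (k - j)).choose (k - j) * (6 * j + 1) * (6 * (k - j : ℕ) + 1))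
      = (-1 / 2 : ℚ) ^ n * n * (1 - 3 * n) := by
  clear hn
  induction n with
  | zero => simp
  | succ n ih =>
    rw [Finset.sum_range_succ, ih, inner_eq]
    have h8 : (-1 / 8 : ℚ) ^ n = (-1 / 2 : ℚ) ^ n / 4 ^ n := by
      rw [div_pow, div_pow]
      have : (8 : ℚ) ^ n = 2 ^ n * 4 ^ n := by
        rw [← mul_pow]; norm_num
      rw [this]
      field_simp
    rw [h8]
    have h4 : (4 : ℚ) ^ n ≠ 0 := by positivity
    push_cast
    field_simp
    ring
end

section
/- In the ring of formal power series ℚ[[x]], the square of Σ_{j≥0} binom(2j,j) x^j equals Σ_{k≥0} 4^k x^k (i.e., 1/(1-4x)). -/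
noncomputable def bq (j : ℕ) : ℚ := ((2 * j).choose j : ℚ)

lemma bq_rec (j : ℕ) : (j + 1 : ℚ) * bq (j + 1) = (4 * j + 2) * bq j := by
  have h := Nat.succ_mul_centralBinom_succ j
  unfold bq
  have h1 : ((j + 1) * Nat.centralBinom (j + 1) : ℚ)
      = (2 * (2 * j + 1) * Nat.centralBinom j : ℚ) := by exact_mod_cast congrArg Nat.cast h
  unfold Nat.centralBinom at h1
  push_cast at h1 ⊢
  linarith [h1]

noncomputable def Sq (n : ℕ) : ℚ := ∑ j ∈ Finset.range (n + 1), bq j * bq (n - j)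

lemma sym (n : ℕ) :
    2 * (∑ j ∈ Finset.range (n + 1), (j : ℚ) * (bq j * bq (n - j))) = n * Sq n := by
  have hrefl : (∑ j ∈ Finset.range (n + 1), (j : ℚ) * (bq j * bq (n - j)))
      = ∑ j ∈ Finset.range (n + 1), ((n - j : ℕ) : ℚ) * (bq (n - j) * bq (n - (n - j))) := by
    rw [← Finset.sum_range_reflect]
    apply Finset.sum_congr rfl
    intro j hj
    simp only [Finset.mem_range] at hj
    have hj' : j ≤ n := Nat.lt_succ_iff.mp hj
    have e1 : n + 1 - 1 - j = n - j := by omega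
    rw [e1, Nat.sub_sub_self hj']
  have hsub : ∀ j ∈ Finset.range (n + 1),
      ((n - j : ℕ) : ℚ) * (bq (n - j) * bq (n - (n - j))) = ((n : ℚ) - j) * (bq j * bq (n - j)) := by
    intro j hj
    simp only [Finset.mem_range] at hj
    have hj' : j ≤ n := Nat.lt_succ_iff.mp hj
    rw [Nat.sub_sub_self hj', Nat.cast_sub hj']
    ring
  rw [two_mul]
  nth_rewrite 2 [hrefl]
  rw [Finset.sum_congr rfl hsub, ← Finset.sum_add_distrib]
  unfold Sq
  rw [Finset.mul_sum]
  apply Finset.sum_congr rfl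
  intro j _
  ring

lemma Sq_succ (n : ℕ) : Sq (n + 1) = 4 * Sq n := by
  have key : (n + 1 : ℚ) * Sq (n + 1)
      = 2 * ∑ j ∈ Finset.range (n + 2), (j : ℚ) * (bq j * bq (n + 1 - j)) := by
    rw [sym (n + 1)]; push_cast; ring
  have shift : (∑ j ∈ Finset.range (n + 2), (j : ℚ) * (bq j * bq (n + 1 - j)))
      = ∑ j ∈ Finset.range (n + 1), ((j : ℚ) + 1) * bq (j + 1) * bq (n - j) := by
    rw [Finset.sum_range_succ']
    simp only [Nat.cast_zero, zero_mul, add_zero]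
    apply Finset.sum_congr rfl
    intro j _
    have : n + 1 - (j + 1) = n - j := by omega
    rw [this]
    push_cast; ring
  have step : (∑ j ∈ Finset.range (n + 1), ((j : ℚ) + 1) * bq (j + 1) * bq (n - j))
      = ∑ j ∈ Finset.range (n + 1), (4 * (j : ℚ) + 2) * (bq j * bq (n - j)) := by
    apply Finset.sum_congr rfl
    intro j _
    have := bq_rec j
    calc ((j : ℚ) + 1) * bq (j + 1) * bq (n - j) = ((j : ℚ) + 1) * bq (j + 1) * bq (n - j) := rfl
    _ = ((4 * j + 2) * bq j) * bq (n - j) := by rw [this]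
    _ = (4 * (j : ℚ) + 2) * (bq j * bq (n - j)) := by ring
  have expand : (∑ j ∈ Finset.range (n + 1), (4 * (j : ℚ) + 2) * (bq j * bq (n - j)))
      = 4 * (∑ j ∈ Finset.range (n + 1), (j : ℚ) * (bq j * bq (n - j))) + 2 * Sq n := by
    unfold Sq
    rw [Finset.mul_sum, Finset.mul_sum, ← Finset.sum_add_distrib]
    apply Finset.sum_congr rfl
    intro j _; ring
  have hsymn := sym n
  have : (n + 1 : ℚ) * Sq (n + 1) = (4 * n + 4) * Sq n := by
    rw [key, shift, step, expand]
    nlinarith [hsymn]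
  have hne : (n + 1 : ℚ) ≠ 0 := by positivity
  field_simp at this
  have : (n + 1 : ℚ) * Sq (n + 1) = (n + 1) * (4 * Sq n) := by linarith
  exact mul_left_cancel₀ hne this

lemma Sq_eq (n : ℕ) : Sq n = 4 ^ n := by
  induction n with
  | zero => simp [Sq, bq]
  | succ k ih => rw [Sq_succ, ih]; ring

theorem stmt_15 :
    (PowerSeries.mk fun j => ((2 * j).choose j : ℚ)) ^ 2
      = PowerSeries.mk fun k => (4 : ℚ) ^ k := by
  ext k
  rw [pow_two, PowerSeries.coeff_mul, PowerSeries.coeff_mk,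
    Finset.Nat.sum_antidiagonal_eq_sum_range_succ_mk]
  simpa [Sq, bq, PowerSeries.coeff_mk] using Sq_eq k
end
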